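/- The ℤ^{n+1}-graded component Der(ℂ_q)_a of the derivation algebra of the quantum torus equals ℂ · ad t^a if a ∉ rad f, and equals ⊕_{i=0}^n ℂ t^a ∂_i if a ∈ rad f, where ∂_i is the degree derivation ∂_i(t^b) = b_i t^b and ad t^a is the inner derivation x ↦ t^a x − x t^a. -/

import Mathlib

/-- `σ(a,b) = ∏_{0 ≤ i ≤ j ≤ n} q_{ji}^{a_j b_i}`. -/
noncomputable def sig {n : ℕ} (q : Fin (n+1) → Fin (n+1) → ℂˣ)
    (a b : Fin (n+1) → ℤ) : ℂˣ :=
  ∏ i : Fin (n+1), ∏ j : Fin (n+1), if i ≤ j then q j i ^ (a j * b i) else 1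

/-- `f(a,b) = σ(a,b) σ(b,a)⁻¹`. -/
noncomputable def ff {n : ℕ} (q : Fin (n+1) → Fin (n+1) → ℂˣ)
    (a b : Fin (n+1) → ℤ) : ℂˣ :=
  sig q a b * (sig q b a)⁻¹
/-- The inner derivation `ad x : y ↦ xy - yx` as a ℂ-linear map. -/
noncomputable def adL {C : Type*} [Ring C] [Algebra ℂ C] (x : C) :
    C →ₗ[ℂ] C :=
  LinearMap.mulLeft ℂ x - LinearMap.mulRight ℂ x

lemma sig_add_left {n : ℕ} (q : Fin (n+1) → Fin (n+1) → ℂˣ)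
    (a b c : Fin (n+1) → ℤ) :
    sig q (a + b) c = sig q a c * sig q b c := by
  unfold sig
  rw [← Finset.prod_mul_distrib]
  refine Finset.prod_congr rfl fun i _ => ?_
  rw [← Finset.prod_mul_distrib]
  refine Finset.prod_congr rfl fun j _ => ?_
  by_cases h : i ≤ j
  · simp [h, add_mul, zpow_add]
  · simp [h]

lemma sig_add_right {n : ℕ} (q : Fin (n+1) → Fin (n+1) → ℂˣ)
    (a b c : Fin (n+1) → ℤ) :
    sig q a (b + c) = sig q a b * sig q a c := by
  unfold sig
  rw [← Finset.prod_mul_distrib]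
  refine Finset.prod_congr rfl fun i _ => ?_
  rw [← Finset.prod_mul_distrib]
  refine Finset.prod_congr rfl fun j _ => ?_
  by_cases h : i ≤ j
  · simp [h, mul_add, zpow_add]
  · simp [h]

/-- Reduce the derivation property to the spanning family. -/
lemma der_ext {C : Type*} [Ring C] [Algebra ℂ C] {ι : Type*}
    (T : ι → C)
    (hTspan : Submodule.span ℂ (Set.range T) = ⊤)
    (Q : C →ₗ[ℂ] C)
    (h : ∀ b c, Q (T b * T c) = Q (T b) * T c + T b * Q (T c)) :
    ∀ x y : C, Q (x * y) = Q x * y + x * Q y := by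
  have key : (LinearMap.mul ℂ C).compr₂ Q
      = (LinearMap.mul ℂ C).comp Q + (LinearMap.mul ℂ C).compl₂ Q := by
    apply LinearMap.ext_on_range hTspan
    intro b
    apply LinearMap.ext_on_range hTspan
    intro c
    simpa using h b c
  intro x y
  have := LinearMap.congr_fun (LinearMap.congr_fun key x) y
  simpa using this

theorem stmt14 {n : ℕ} (q : Fin (n+1) → Fin (n+1) → ℂˣ)
    (hq1 : ∀ i, q i i = 1) (hq2 : ∀ i j, q i j = (q j i)⁻¹)
    (hroot : ∀ i j, ∃ m : ℕ, 0 < m ∧ q i j ^ m = 1)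
    {C : Type*} [Ring C] [Algebra ℂ C]
    (T : (Fin (n+1) → ℤ) → C)
    (hT : ∀ a b, T a * T b = ((sig q a b : ℂ)) • T (a + b))
    (hT0 : T 0 = 1)
    (hTind : LinearIndependent ℂ T)
    (hTspan : Submodule.span ℂ (Set.range T) = ⊤)
    -- `P a i` is the linear map `t^a ∂ᵢ : t^b ↦ bᵢ σ(a,b) t^{a+b}`
    (P : (Fin (n+1) → ℤ) → Fin (n+1) → (C →ₗ[ℂ] C))
    (hP : ∀ a i b, P a i (T b) = ((b i : ℂ) * ((sig q a b : ℂ))) • T (a + b))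
    (a : Fin (n+1) → ℤ) (D : C →ₗ[ℂ] C) :
    ((∀ b, ff q a b = 1) →
      (((∀ x y : C, D (x * y) = D x * y + x * D y) ∧
          ∀ b, D (T b) ∈ Submodule.span ℂ {T (a + b)}) ↔
        ∃ u : Fin (n+1) → ℂ, D = ∑ i : Fin (n+1), u i • P a i)) ∧
    ((¬ ∀ b, ff q a b = 1) →
      (((∀ x y : C, D (x * y) = D x * y + x * D y) ∧
          ∀ b, D (T b) ∈ Submodule.span ℂ {T (a + b)}) ↔
        ∃ c : ℂ, D = c • adL (T a))) := by
  have σne : ∀ x y, ((sig q x y : ℂ)) ≠ 0 := fun x y => Units.ne_zero _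
  have Tne : ∀ x, T x ≠ 0 := fun x => hTind.ne_zero x
  have scal : ∀ (x : Fin (n+1) → ℤ) (α β : ℂ), α • T x = β • T x → α = β := by
    intro x α β h
    by_contra hne
    apply Tne x
    have h0 : (α - β) • T x = 0 := by rw [sub_smul, h, sub_self]
    have h1 := congrArg (fun z => (α - β)⁻¹ • z) h0
    simpa [smul_smul, inv_mul_cancel₀ (sub_ne_zero.mpr hne)] using h1
  have cL : ∀ x y z, ((sig q (x + y) z : ℂ)) = (sig q x z : ℂ) * (sig q y z : ℂ) := by
    intro x y z; rw [sig_add_left, Units.val_mul]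
  have cR : ∀ x y z, ((sig q x (y + z) : ℂ)) = (sig q x y : ℂ) * (sig q x z : ℂ) := by
    intro x y z; rw [sig_add_right, Units.val_mul]
  -- From the derivation + degree hypotheses, extract the scalar function `g`
  -- and its fundamental equation.
  have extract : (∀ x y : C, D (x * y) = D x * y + x * D y) →
      (∀ b, D (T b) ∈ Submodule.span ℂ {T (a + b)}) →
      ∃ g : (Fin (n+1) → ℤ) → ℂ, (∀ b, D (T b) = g b • T (a + b)) ∧
        ∀ b c, g (b + c) = (sig q a c : ℂ) * g b + (sig q b a : ℂ) * g c := by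
    intro hder hsp
    choose g hg using fun b => Submodule.mem_span_singleton.mp (hsp b)
    refine ⟨g, fun b => (hg b).symm, ?_⟩
    intro b c
    have h1 := hder (T b) (T c)
    rw [hT b c, map_smul, ← hg (b + c), ← hg b, ← hg c, smul_mul_assoc,
      mul_smul_comm, hT (a + b) c, hT b (a + c)] at h1
    have e1 : a + (b + c) = a + b + c := (add_assoc a b c).symm
    have e2 : b + (a + c) = a + b + c := by rw [← add_assoc, add_comm b a]
    rw [e1, e2, smul_smul, smul_smul, smul_smul, ← add_smul] at h1
    have h2 := scal _ _ _ h1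
    apply mul_left_cancel₀ (σne b c)
    rw [h2, cL a b c, cR b a c]
    ring
  constructor
  · -- the radical case
    intro hrad
    have hsym : ∀ x, (sig q a x : ℂ) = (sig q x a : ℂ) := by
      intro x
      have := hrad x
      rw [ff, mul_inv_eq_one] at this
      exact congrArg Units.val this
    constructor
    · rintro ⟨hder, hsp⟩
      obtain ⟨g, hg, hE⟩ := extract hder hsp
      have hadd : ∀ b c, g (b + c) / (sig q a (b + c) : ℂ)
          = g b / (sig q a b : ℂ) + g c / (sig q a c : ℂ) := by
        intro b c
        have key := hE b c
        rw [← hsym b] at key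
        rw [cR a b c, key]
        field_simp [σne a b, σne a c]
      set h : (Fin (n+1) → ℤ) → ℂ := fun b => g b / (sig q a b : ℂ) with hh
      let H : (Fin (n+1) → ℤ) →+ ℂ := AddMonoidHom.mk' h hadd
      have hcomb : ∀ b, h b = ∑ i, (b i : ℂ) * h (Pi.single i 1) := by
        intro b
        have hb : (∑ i, Pi.single i (b i)) = b := Finset.univ_sum_single b
        calc h b = H (∑ i, Pi.single i (b i)) := by rw [hb]; rfl
          _ = ∑ i, H (Pi.single i (b i)) := map_sum H _ _
          _ = ∑ i, (b i : ℂ) * h ((Pi.single i 1 : Fin (n+1) → ℤ)) := by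
              refine Finset.sum_congr rfl fun i _ => ?_
              have hsingle : Pi.single i (b i) = (b i) • (Pi.single i 1 : Fin (n+1) → ℤ) := by
                rw [← Pi.single_smul, smul_eq_mul, mul_one]
              rw [hsingle, map_zsmul, zsmul_eq_mul]
              rfl
      refine ⟨fun i => h (Pi.single i 1 : _), ?_⟩
      apply LinearMap.ext_on_range hTspan
      intro b
      rw [hg b, LinearMap.sum_apply]
      simp only [LinearMap.smul_apply, hP, smul_smul]
      rw [← Finset.sum_smul]
      congr 1
      have hb := hcomb b
      rw [hh] at hb
      simp only at hb
      rw [div_eq_iff (σne a b)] at hb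
      rw [hb, Finset.sum_mul]
      exact Finset.sum_congr rfl fun i _ => by ring
    · rintro ⟨u, hu⟩
      set Q : C →ₗ[ℂ] C := ∑ i : Fin (n+1), u i • P a i with hQdef
      have hQ : ∀ x, Q (T x) = (∑ i, u i * ((x i : ℂ) * (sig q a x : ℂ))) • T (a + x) := by
        intro x
        rw [hQdef, LinearMap.sum_apply]
        simp only [LinearMap.smul_apply, hP, smul_smul]
        rw [← Finset.sum_smul]
      rw [hu]
      constructor
      · apply der_ext T hTspan
        intro b c
        have e1 : a + (b + c) = a + b + c := (add_assoc a b c).symm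
        have e2 : b + (a + c) = a + b + c := by rw [← add_assoc, add_comm b a]
        rw [hT b c, map_smul, hQ, hQ b, hQ c, smul_mul_assoc, mul_smul_comm,
          hT (a + b) c, hT b (a + c), smul_smul, smul_smul, smul_smul, e1, e2, ← add_smul]
        congr 1
        rw [cR a b c, cL a b c, cR b a c, ← hsym b, Finset.mul_sum,
          Finset.sum_mul, Finset.sum_mul, ← Finset.sum_add_distrib]
        refine Finset.sum_congr rfl fun i _ => ?_
        have : ((b + c) i : ℂ) = (b i : ℂ) + (c i : ℂ) := by
          rw [Pi.add_apply]; push_cast; ring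
        rw [this]
        ring
      · intro b
        rw [hQ b]
        exact Submodule.mem_span_singleton.mpr ⟨_, rfl⟩
  · -- the non-radical case
    intro hnrad
    have hAd : ∀ x, adL (T a) (T x)
        = ((sig q a x : ℂ) - (sig q x a : ℂ)) • T (a + x) := by
      intro x
      show T a * T x - T x * T a = _
      rw [hT a x, hT x a, show x + a = a + x from add_comm x a, sub_smul]
    constructor
    · rintro ⟨hder, hsp⟩
      obtain ⟨g, hg, hE⟩ := extract hder hsp
      have star : ∀ b c, ((sig q a c : ℂ) - (sig q c a : ℂ)) * g b
          = ((sig q a b : ℂ) - (sig q b a : ℂ)) * g c := by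
        intro b c
        have h1 := hE b c
        have h2 := hE c b
        rw [add_comm c b] at h2
        linear_combination h2 - h1
      push_neg at hnrad
      obtain ⟨b0, hb0⟩ := hnrad
      have hne : (sig q a b0 : ℂ) ≠ (sig q b0 a : ℂ) := by
        intro h
        apply hb0
        rw [ff, mul_inv_eq_one]
        exact Units.ext h
      have hd : (sig q a b0 : ℂ) - (sig q b0 a : ℂ) ≠ 0 := sub_ne_zero.mpr hne
      refine ⟨g b0 / ((sig q a b0 : ℂ) - (sig q b0 a : ℂ)), ?_⟩
      apply LinearMap.ext_on_range hTspan
      intro b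
      rw [hg b, LinearMap.smul_apply, hAd b, smul_smul]
      congr 1
      have := star b b0
      field_simp
      linear_combination this
    · rintro ⟨c, hc⟩
      rw [hc]
      constructor
      · intro x y
        rw [LinearMap.smul_apply, LinearMap.smul_apply, LinearMap.smul_apply,
          smul_mul_assoc, mul_smul_comm, ← smul_add]
        congr 1
        simp only [adL, LinearMap.sub_apply, LinearMap.mulLeft_apply,
          LinearMap.mulRight_apply]
        noncomm_ring
      · intro b
        rw [LinearMap.smul_apply, hAd b, smul_smul]
        exact Submodule.mem_span_singleton.mpr ⟨_, rfl⟩
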